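/- Let η, ξ₁ ∈ ℂ with sinh η ≠ 0 and sinh 2η ≠ 0, and take L = 2 with inhomogeneities w₁ = ξ₁, w₂ = ξ₁ − η. For all λ ∈ ℂ with sinh(λ−ξ₁+η) ≠ 0 and sinh(λ−ξ₁+2η) ≠ 0, the transfer matrix A(λ)+D(λ) of the homogeneous-grading monodromy matrix on (ℂ²)^{⊗2} preserves the two-dimensional one-down-spin sector span{|01⟩, |10⟩}, its restriction there is the matrix [[b(λ−w₁)+b(λ−w₂), c⁺(λ−w₁)c⁻(λ−w₂)], [c⁻(λ−w₁)c⁺(λ−w₂), b(λ−w₁)+b(λ−w₂)]], and the determinant of this restriction equals 4 sinh(λ−ξ₁)/sinh(λ−ξ₁+2η); in particular it vanishes at λ = ξ₁, so the transfer matrix is non-regular there. -/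

import Mathlib

noncomputable section

/-- The q-integer `[n]_q = (qⁿ − q⁻ⁿ)/(q − q⁻¹)`. -/
def qint (q : ℂ) (n : ℕ) : ℂ := (q ^ (n : ℤ) - q ^ (-(n : ℤ))) / (q - q⁻¹)

/-- The q-factorial `[n]_q! = ∏_{m=1}^n [m]_q`. -/
def qfact (q : ℂ) (n : ℕ) : ℂ := ∏ m ∈ Finset.range n, qint q (m + 1)

/-- The q-binomial coefficient `[l choose n]_q`. -/
def qbinom (q : ℂ) (l n : ℕ) : ℂ := qfact q l / (qfact q (l - n) * qfact q n)
/-- `b(u) = sinh u / sinh(u+η)`. -/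
def bC (η u : ℂ) : ℂ := Complex.sinh u / Complex.sinh (u + η)

/-- `c⁺(u) = e^{u} sinh η / sinh(u+η)`. -/
def cP (η u : ℂ) : ℂ := Complex.exp u * Complex.sinh η / Complex.sinh (u + η)

/-- `c⁻(u) = e^{−u} sinh η / sinh(u+η)`. -/
def cM (η u : ℂ) : ℂ := Complex.exp (-u) * Complex.sinh η / Complex.sinh (u + η)

/-- The homogeneous-grading R-matrix `R⁺(u)` on `ℂ² ⊗ ℂ²`: identity on `|00⟩`, `|11⟩`,
and `[[b, c⁻],[c⁺, b]]` on `span{|01⟩, |10⟩}`. -/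
def Rplus (η u : ℂ) : Matrix (Fin 2 × Fin 2) (Fin 2 × Fin 2) ℂ :=
  Matrix.of fun p p' =>
    if p = p' then (if p.1 = p.2 then 1 else bC η u)
    else if p.1 = 0 ∧ p.2 = 1 ∧ p'.1 = 1 ∧ p'.2 = 0 then cM η u
    else if p.1 = 1 ∧ p.2 = 0 ∧ p'.1 = 0 ∧ p'.2 = 1 then cP η u
    else 0

/-- The principal-grading (symmetric) R-matrix `R^p(u)`: identity on `|00⟩`, `|11⟩`,
and `[[b, c],[c, b]]` on `span{|01⟩, |10⟩}` with `c(u) = sinh η / sinh(u+η)`. -/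
def Rprin (η u : ℂ) : Matrix (Fin 2 × Fin 2) (Fin 2 × Fin 2) ℂ :=
  Matrix.of fun p p' =>
    if p = p' then (if p.1 = p.2 then 1 else bC η u)
    else if (p.1 = 0 ∧ p.2 = 1 ∧ p'.1 = 1 ∧ p'.2 = 0) ∨
            (p.1 = 1 ∧ p.2 = 0 ∧ p'.1 = 0 ∧ p'.2 = 1) then
      Complex.sinh η / Complex.sinh (u + η)
    else 0

/-- A 4×4 R-matrix acting on the pair (auxiliary space 0, quantum site j), identity on
the other sites. -/
def Rsite {S : Type*} [DecidableEq S] [Fintype S]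
    (R2 : Matrix (Fin 2 × Fin 2) (Fin 2 × Fin 2) ℂ) (j : S) :
    Matrix (Fin 2 × (S → Fin 2)) (Fin 2 × (S → Fin 2)) ℂ :=
  Matrix.of fun p p' =>
    if ∀ k, k ≠ j → p.2 k = p'.2 k then R2 (p.1, p.2 j) (p'.1, p'.2 j) else 0

/-- The monodromy matrix `T(λ) = R_{0,L}(λ−w_L) ⋯ R_{0,1}(λ−w_1)`, where `sites` lists
the sites `1,…,L` in increasing order. -/
def monodromy {S : Type*} [DecidableEq S] [Fintype S]
    (R2 : ℂ → Matrix (Fin 2 × Fin 2) (Fin 2 × Fin 2) ℂ)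
    (sites : List S) (w : S → ℂ) (lam : ℂ) :
    Matrix (Fin 2 × (S → Fin 2)) (Fin 2 × (S → Fin 2)) ℂ :=
  ((sites.map fun j => Rsite (R2 (lam - w j)) j).reverse).prod

/-- The auxiliary-space block entry of a monodromy matrix: `T_{a,b}` acting on the
quantum space (so `A = T_{0,0}`, `B = T_{0,1}`, `C = T_{1,0}`, `D = T_{1,1}`). -/
def entryT {S : Type*} (T : Matrix (Fin 2 × (S → Fin 2)) (Fin 2 × (S → Fin 2)) ℂ)
    (a b : Fin 2) : Matrix (S → Fin 2) (S → Fin 2) ℂ :=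
  Matrix.of fun ε ε' => T (a, ε) (b, ε')

/-- The number of down spins of a configuration. -/
def dcount {S : Type*} [Fintype S] [DecidableEq S] (ε : S → Fin 2) : ℕ :=
  (Finset.univ.filter fun s => ε s = 1).card

/-- The list of sites of the blocked chain in increasing (lexicographic) order. -/
def sitesList (l Ns : ℕ) : List (Fin Ns × Fin l) :=
  (List.finRange Ns).flatMap fun b => (List.finRange l).map fun β => (b, β)

/-! ### Auxiliary lemmas -/

private lemma sum_pi2 (g : (Fin 2 → Fin 2) → ℂ) :
    ∑ f, g f = g ![0,0] + g ![0,1] + g ![1,0] + g ![1,1] := by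
  rw [← (piFinTwoEquiv fun _ => Fin 2).symm.sum_comp]
  have h : ∀ x y : Fin 2, (Fin.cons x (Fin.cons y finZeroElim) : Fin 2 → Fin 2) = ![x,y] := by
    intro x y; funext k; fin_cases k <;> rfl
  simp [Fintype.sum_prod_type, Fin.sum_univ_two, piFinTwoEquiv, h]
  ring

private lemma Tentry (η u1 u2 : ℂ) (a b : Fin 2) (x y x' y' : Fin 2) :
    (Rsite (Rplus η u2) (1 : Fin 2) * Rsite (Rplus η u1) (0 : Fin 2)) (a, ![x,y]) (b, ![x',y'])
      = ∑ c : Fin 2, (Rplus η u2) (a, y) (c, y') * (Rplus η u1) (c, x) (b, x') := by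
  simp only [Matrix.mul_apply]
  rw [Fintype.sum_prod_type]
  refine Finset.sum_congr rfl fun c _ => ?_
  rw [sum_pi2]
  simp only [Rsite, Matrix.of_apply, Fin.forall_fin_two, ne_eq, Matrix.cons_val_zero,
    Matrix.cons_val_one, Matrix.head_cons]
  norm_num
  fin_cases x <;> fin_cases y' <;> simp

private lemma pi2_cases (ε : Fin 2 → Fin 2) (h : dcount ε ≠ 1) :
    ε = ![0,0] ∨ ε = ![1,1] := by
  revert h; revert ε; decide

private lemma key0 (η x : ℂ) : Complex.sinh (x - η) * Complex.sinh (x + η)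
    = Complex.sinh x ^ 2 - Complex.sinh η ^ 2 := by
  rw [Complex.sinh_sub, Complex.sinh_add]
  linear_combination (Complex.sinh x ^ 2) * Complex.cosh_sq_sub_sinh_sq η
    - (Complex.sinh η ^ 2) * Complex.cosh_sq_sub_sinh_sq x

private lemma key (η u : ℂ) : Complex.sinh u * Complex.sinh (u + 2 * η)
    = Complex.sinh (u + η) ^ 2 - Complex.sinh η ^ 2 := by
  have := key0 η (u + η)
  rw [show u + η - η = u from by ring, show u + η + η = u + 2 * η from by ring] at this
  exact this

private lemma detid (η u : ℂ) (h1 : Complex.sinh (u + η) ≠ 0)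
    (h2 : Complex.sinh (u + 2 * η) ≠ 0) :
    (bC η u + bC η (u + η)) * (bC η u + bC η (u + η))
      - (cP η u * cM η (u + η)) * (cM η u * cP η (u + η))
      = 4 * Complex.sinh u / Complex.sinh (u + 2 * η) := by
  have h3 : u + η + η = u + 2 * η := by ring
  have hcc : (cP η u * cM η (u + η)) * (cM η u * cP η (u + η))
      = Complex.sinh η ^ 2 / Complex.sinh (u + η) ^ 2
        * (Complex.sinh η ^ 2 / Complex.sinh (u + 2 * η) ^ 2) := by
    simp only [cP, cM, h3, Complex.exp_neg]
    field_simp [Complex.exp_ne_zero]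
  rw [hcc]
  simp only [bC, h3]
  set s0 := Complex.sinh u
  set s1 := Complex.sinh (u + η)
  set s2 := Complex.sinh (u + 2 * η)
  set sh := Complex.sinh η
  field_simp
  linear_combination (s0 * s2 - s1 ^ 2 - sh ^ 2) * key η u

/-- The transfer matrix for `L = 2`, `w = ![ξ₁, ξ₁ - η]`. -/
private def trL2 (η ξ₁ lam : ℂ) : Matrix (Fin 2 → Fin 2) (Fin 2 → Fin 2) ℂ :=
  entryT (monodromy (Rplus η) (List.finRange 2) ![ξ₁, ξ₁ - η] lam) 0 0
    + entryT (monodromy (Rplus η) (List.finRange 2) ![ξ₁, ξ₁ - η] lam) 1 1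

private lemma mono2 (η ξ₁ lam : ℂ) :
    monodromy (Rplus η) (List.finRange 2) ![ξ₁, ξ₁ - η] lam
      = Rsite (Rplus η (lam - (ξ₁ - η))) (1 : Fin 2)
          * Rsite (Rplus η (lam - ξ₁)) (0 : Fin 2) := by
  simp [monodromy, List.finRange_succ, List.finRange]

private lemma trL2_eq (η ξ₁ lam : ℂ) (x y x' y' : Fin 2) :
    trL2 η ξ₁ lam ![x,y] ![x',y']
      = ∑ a : Fin 2, ∑ c : Fin 2,
          Rplus η (lam - (ξ₁ - η)) (a, y) (c, y') * Rplus η (lam - ξ₁) (c, x) (a, x') := by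
  simp only [trL2, Matrix.add_apply, entryT, Matrix.of_apply, mono2, Tentry, Fin.sum_univ_two]

private lemma trL2_0101 (η ξ₁ lam : ℂ) :
    trL2 η ξ₁ lam ![0,1] ![0,1] = bC η (lam - ξ₁) + bC η (lam - (ξ₁ - η)) := by
  rw [trL2_eq]
  norm_num [Rplus, Fin.sum_univ_two, Prod.ext_iff]
  ring

private lemma trL2_0110 (η ξ₁ lam : ℂ) :
    trL2 η ξ₁ lam ![0,1] ![1,0] = cP η (lam - ξ₁) * cM η (lam - (ξ₁ - η)) := by
  rw [trL2_eq]
  norm_num [Rplus, Fin.sum_univ_two, Prod.ext_iff]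
  ring

private lemma trL2_1001 (η ξ₁ lam : ℂ) :
    trL2 η ξ₁ lam ![1,0] ![0,1] = cM η (lam - ξ₁) * cP η (lam - (ξ₁ - η)) := by
  rw [trL2_eq]
  norm_num [Rplus, Fin.sum_univ_two, Prod.ext_iff]
  ring

private lemma trL2_1010 (η ξ₁ lam : ℂ) :
    trL2 η ξ₁ lam ![1,0] ![1,0] = bC η (lam - ξ₁) + bC η (lam - (ξ₁ - η)) := by
  rw [trL2_eq]
  norm_num [Rplus, Fin.sum_univ_two, Prod.ext_iff]

private lemma trL2_z1 (η ξ₁ lam : ℂ) : trL2 η ξ₁ lam ![0,0] ![0,1] = 0 := by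
  rw [trL2_eq]; norm_num [Rplus, Fin.sum_univ_two, Prod.ext_iff]

private lemma trL2_z2 (η ξ₁ lam : ℂ) : trL2 η ξ₁ lam ![0,0] ![1,0] = 0 := by
  rw [trL2_eq]; norm_num [Rplus, Fin.sum_univ_two, Prod.ext_iff]

private lemma trL2_z3 (η ξ₁ lam : ℂ) : trL2 η ξ₁ lam ![1,1] ![0,1] = 0 := by
  rw [trL2_eq]; norm_num [Rplus, Fin.sum_univ_two, Prod.ext_iff]

private lemma trL2_z4 (η ξ₁ lam : ℂ) : trL2 η ξ₁ lam ![1,1] ![1,0] = 0 := by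
  rw [trL2_eq]; norm_num [Rplus, Fin.sum_univ_two, Prod.ext_iff]

/-- For `L = 2` with inhomogeneities `w₁ = ξ₁`, `w₂ = ξ₁ − η`, the
transfer matrix `A(λ)+D(λ)` preserves the one-down-spin sector `span{|01⟩,|10⟩}`; its
restriction there is `[[b₁+b₂, c⁺₁c⁻₂],[c⁻₁c⁺₂, b₁+b₂]]`, the determinant of the
restriction equals `4 sinh(λ−ξ₁)/sinh(λ−ξ₁+2η)`, and in particular it vanishes at
`λ = ξ₁` (non-regularity of the transfer matrix). -/
theorem transfer_nonregular_L2 (η ξ₁ : ℂ)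
    (hη : Complex.sinh η ≠ 0) (hη2 : Complex.sinh (2 * η) ≠ 0) :
    (∀ lam : ℂ, Complex.sinh (lam - ξ₁ + η) ≠ 0 → Complex.sinh (lam - ξ₁ + 2 * η) ≠ 0 →
      (let w : Fin 2 → ℂ := ![ξ₁, ξ₁ - η]
       let T := monodromy (Rplus η) (List.finRange 2) w lam
       let tr := entryT T 0 0 + entryT T 1 1
       let e01 : Fin 2 → Fin 2 := fun k => if k = 1 then 1 else 0
       let e10 : Fin 2 → Fin 2 := fun k => if k = 0 then 1 else 0
       (∀ v : (Fin 2 → Fin 2) → ℂ, (∀ ε, dcount ε ≠ 1 → v ε = 0) →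
          ∀ ε, dcount ε ≠ 1 → tr.mulVec v ε = 0)
       ∧ tr e01 e01 = bC η (lam - ξ₁) + bC η (lam - (ξ₁ - η))
       ∧ tr e01 e10 = cP η (lam - ξ₁) * cM η (lam - (ξ₁ - η))
       ∧ tr e10 e01 = cM η (lam - ξ₁) * cP η (lam - (ξ₁ - η))
       ∧ tr e10 e10 = bC η (lam - ξ₁) + bC η (lam - (ξ₁ - η))
       ∧ tr e01 e01 * tr e10 e10 - tr e01 e10 * tr e10 e01
           = 4 * Complex.sinh (lam - ξ₁) / Complex.sinh (lam - ξ₁ + 2 * η)))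
    ∧ (let w : Fin 2 → ℂ := ![ξ₁, ξ₁ - η]
       let T := monodromy (Rplus η) (List.finRange 2) w ξ₁
       let tr := entryT T 0 0 + entryT T 1 1
       let e01 : Fin 2 → Fin 2 := fun k => if k = 1 then 1 else 0
       let e10 : Fin 2 → Fin 2 := fun k => if k = 0 then 1 else 0
       tr e01 e01 * tr e10 e10 - tr e01 e10 * tr e10 e01 = 0) := by

  have hdet : ∀ lam : ℂ, Complex.sinh (lam - ξ₁ + η) ≠ 0 →
      Complex.sinh (lam - ξ₁ + 2 * η) ≠ 0 →
      trL2 η ξ₁ lam ![0,1] ![0,1] * trL2 η ξ₁ lam ![1,0] ![1,0]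
        - trL2 η ξ₁ lam ![0,1] ![1,0] * trL2 η ξ₁ lam ![1,0] ![0,1]
        = 4 * Complex.sinh (lam - ξ₁) / Complex.sinh (lam - ξ₁ + 2 * η) := by
    intro lam h1 h2
    rw [trL2_0101, trL2_1010, trL2_0110, trL2_1001]
    rw [show lam - (ξ₁ - η) = (lam - ξ₁) + η from by ring]
    exact detid η (lam - ξ₁) h1 h2
  constructor
  · intro lam h1 h2
    intro w T tr e01 e10
    have he01 : e01 = ![0,1] := by funext k; fin_cases k <;> rfl
    have he10 : e10 = ![1,0] := by funext k; fin_cases k <;> rfl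
    have htr : tr = trL2 η ξ₁ lam := rfl
    refine ⟨?_, ?_, ?_, ?_, ?_, ?_⟩
    · intro v hv ε hε
      have hv1 : v ![0,0] = 0 := hv _ (by decide)
      have hv2 : v ![1,1] = 0 := hv _ (by decide)
      rw [Matrix.mulVec, dotProduct]
      rw [sum_pi2 (fun f => tr ε f * v f)]
      rcases pi2_cases ε hε with rfl | rfl <;>
        simp [hv1, hv2, htr, trL2_z1, trL2_z2, trL2_z3, trL2_z4]
    · rw [he01, htr]; exact trL2_0101 η ξ₁ lam
    · rw [he01, he10, htr]; exact trL2_0110 η ξ₁ lam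
    · rw [he01, he10, htr]; exact trL2_1001 η ξ₁ lam
    · rw [he10, htr]; exact trL2_1010 η ξ₁ lam
    · rw [he01, he10, htr]; exact hdet lam h1 h2
  · intro w T tr e01 e10
    have he01 : e01 = ![0,1] := by funext k; fin_cases k <;> rfl
    have he10 : e10 = ![1,0] := by funext k; fin_cases k <;> rfl
    have htr : tr = trL2 η ξ₁ ξ₁ := rfl
    rw [he01, he10, htr]
    have h1 : Complex.sinh (ξ₁ - ξ₁ + η) ≠ 0 := by
      rw [show ξ₁ - ξ₁ + η = η from by ring]; exact hη
    have h2 : Complex.sinh (ξ₁ - ξ₁ + 2 * η) ≠ 0 := by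
      rw [show ξ₁ - ξ₁ + 2 * η = 2 * η from by ring]; exact hη2
    rw [hdet ξ₁ h1 h2]
    simp
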